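/- Let G ∈ ℝ^{p×n} have full row rank, let M ∈ ℝ^{n×n} be symmetric positive definite, and let R ∈ ℝ^{k×n} satisfy range(Rᵀ) = null(G). Then M Gᵀ (G M Gᵀ)⁻¹ G + M^{1/2} (R M^{-1/2})⁺ R M⁻¹ = I_n. -/

import Mathlib

open Matrix

def IsMoorePenrose {n m : Type*} [Fintype n] [Fintype m] [DecidableEq n] [DecidableEq m]
    (A : Matrix n m ℝ) (A' : Matrix m n ℝ) : Prop :=
  A * A' * A = A ∧ A' * A * A' = A' ∧ (A * A')ᵀ = A * A' ∧ (A' * A)ᵀ = A' * A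

private lemma aux_proj {p n k : ℕ} (C : Matrix (Fin p) (Fin n) ℝ)
    (B : Matrix (Fin k) (Fin n) ℝ) (Y : Matrix (Fin n) (Fin k) ℝ)
    (hBYB : B * Y * B = B) (hYBY : Y * B * Y = Y) (hYBsym : (Y * B)ᵀ = Y * B)
    (hCB : C * Bᵀ = 0)
    (hCCdet : IsUnit (C * Cᵀ).det)
    (hker : ∀ x : Fin n → ℝ, C *ᵥ x = 0 → ∃ y, Bᵀ *ᵥ y = x) :
    Cᵀ * (C * Cᵀ)⁻¹ * C + Y * B = 1 := by
  have hCCi : (C * Cᵀ) * (C * Cᵀ)⁻¹ = 1 := mul_nonsing_inv _ hCCdet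
  have hCCsym : (C * Cᵀ)ᵀ = C * Cᵀ := by rw [transpose_mul, transpose_transpose]
  have hWsym : ((C * Cᵀ)⁻¹)ᵀ = (C * Cᵀ)⁻¹ := by rw [transpose_nonsing_inv, hCCsym]
  -- helper: C * (Cᵀ * (W * X)) = X
  have hCCW : ∀ {m : ℕ} (X : Matrix (Fin p) (Fin m) ℝ),
      C * (Cᵀ * ((C * Cᵀ)⁻¹ * X)) = X := by
    intro m X
    calc C * (Cᵀ * ((C * Cᵀ)⁻¹ * X)) = (C * Cᵀ) * ((C * Cᵀ)⁻¹ * X) :=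
          (Matrix.mul_assoc C Cᵀ _).symm
    _ = ((C * Cᵀ) * (C * Cᵀ)⁻¹) * X := (Matrix.mul_assoc _ _ _).symm
    _ = X := by rw [hCCi, Matrix.one_mul]
  set W : Matrix (Fin p) (Fin p) ℝ := (C * Cᵀ)⁻¹ with hWdef
  -- right-associated versions
  have hBYB' : B * (Y * B) = B := by rw [← Matrix.mul_assoc, hBYB]
  have hYBY' : Y * (B * Y) = Y := by rw [← Matrix.mul_assoc, hYBY]
  have hQQ : (Cᵀ * (W * C)) * (Cᵀ * (W * C)) = Cᵀ * (W * C) := by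
    calc (Cᵀ * (W * C)) * (Cᵀ * (W * C))
        = Cᵀ * (W * (C * (Cᵀ * (W * C)))) := by simp only [Matrix.mul_assoc]
    _ = Cᵀ * (W * C) := by rw [hCCW C]
  have hQsym : (Cᵀ * (W * C))ᵀ = Cᵀ * (W * C) := by
    rw [transpose_mul, transpose_mul, transpose_transpose, hWsym]
    simp only [Matrix.mul_assoc]
  have hCYB : C * (Y * B) = 0 := by
    rw [← hYBsym, transpose_mul, ← Matrix.mul_assoc, hCB, Matrix.zero_mul]
  have hQP : (Cᵀ * (W * C)) * (Y * B) = 0 := by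
    calc (Cᵀ * (W * C)) * (Y * B) = Cᵀ * (W * (C * (Y * B))) := by
          simp only [Matrix.mul_assoc]
    _ = 0 := by rw [hCYB, Matrix.mul_zero, Matrix.mul_zero]
  have hPQ : (Y * B) * (Cᵀ * (W * C)) = 0 := by
    have h := congrArg Matrix.transpose hQP
    rwa [transpose_mul, hQsym, hYBsym, transpose_zero] at h
  have hPP : (Y * B) * (Y * B) = Y * B := by
    calc (Y * B) * (Y * B) = Y * (B * (Y * B)) := by simp only [Matrix.mul_assoc]
    _ = Y * B := by rw [hBYB']
  have hPBt : (Y * B) * Bᵀ = Bᵀ := by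
    calc (Y * B) * Bᵀ = (Y * B)ᵀ * Bᵀ := by rw [hYBsym]
    _ = (B * (Y * B))ᵀ := by rw [← transpose_mul]
    _ = Bᵀ := by rw [hBYB']
  set Q : Matrix (Fin n) (Fin n) ℝ := Cᵀ * (W * C) with hQdef
  set P : Matrix (Fin n) (Fin n) ℝ := Y * B with hPdef
  have hCQ : C * Q = C := by rw [hQdef, hCCW C]
  have hEE : (Q + P) * (Q + P) = Q + P := by
    rw [Matrix.add_mul, Matrix.mul_add, Matrix.mul_add, hQQ, hQP, hPQ, hPP,
      add_zero, zero_add]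
  have hQE : Q * (Q + P) = Q := by rw [Matrix.mul_add, hQQ, hQP, add_zero]
  have hPE : P * (Q + P) = P := by rw [Matrix.mul_add, hPQ, hPP, zero_add]
  have hE0 : ∀ x : Fin n → ℝ, (Q + P) *ᵥ x = 0 → x = 0 := by
    intro x hx
    have hQx : Q *ᵥ x = 0 := by
      have h : (Q * (Q + P)) *ᵥ x = Q *ᵥ ((Q + P) *ᵥ x) := (mulVec_mulVec _ _ _).symm
      rw [hQE, hx, mulVec_zero] at h; exact h
    have hPx : P *ᵥ x = 0 := by
      have h : (P * (Q + P)) *ᵥ x = P *ᵥ ((Q + P) *ᵥ x) := (mulVec_mulVec _ _ _).symm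
      rw [hPE, hx, mulVec_zero] at h; exact h
    have hCx : C *ᵥ x = 0 := by
      have h : (C * Q) *ᵥ x = C *ᵥ (Q *ᵥ x) := (mulVec_mulVec _ _ _).symm
      rw [hCQ, hQx, mulVec_zero] at h; exact h
    obtain ⟨y, hy⟩ := hker x hCx
    have hfix : P *ᵥ x = x := by
      rw [← hy, mulVec_mulVec, hPdef, hPBt]
    rw [hPx] at hfix; exact hfix.symm
  have hE1 : Q + P = 1 := by
    have hfix : ∀ x : Fin n → ℝ, (Q + P) *ᵥ x = x := by
      intro x
      have h0 : (Q + P) *ᵥ ((Q + P) *ᵥ x - x) = 0 := by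
        rw [mulVec_sub, mulVec_mulVec, hEE, sub_self]
      exact sub_eq_zero.mp (hE0 _ h0)
    ext i j
    have h0 := hfix (Pi.single j 1)
    rw [mulVec_single_one] at h0
    have h := congr_fun h0 i
    rw [col_apply] at h
    rw [h, Matrix.one_apply, Pi.single_apply]
  calc Cᵀ * (C * Cᵀ)⁻¹ * C + Y * B = Q + P := by
        rw [hQdef, hWdef, Matrix.mul_assoc, hPdef]
  _ = 1 := hE1

theorem stmt8 {p n k : ℕ} (G : Matrix (Fin p) (Fin n) ℝ) (hG : G.rank = p)
    (M S : Matrix (Fin n) (Fin n) ℝ) (hM : M.PosDef) (hS : S.PosDef) (hSS : S * S = M)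
    (R : Matrix (Fin k) (Fin n) ℝ)
    (hR : LinearMap.range (Rᵀ.mulVecLin) = LinearMap.ker (G.mulVecLin))
    (Yp : Matrix (Fin n) (Fin k) ℝ) (hYp : IsMoorePenrose (R * S⁻¹) Yp) :
    M * Gᵀ * (G * M * Gᵀ)⁻¹ * G + S * Yp * R * M⁻¹ = 1 := by
  obtain ⟨hBYB, hYBY, hBYsym, hYBsym⟩ := hYp
  have hSdet : IsUnit S.det := hS.det_pos.ne'.isUnit
  have hSsym : Sᵀ = S := hS.isHermitian.eq
  have hSS' : S * S⁻¹ = 1 := mul_nonsing_inv S hSdet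
  have hS'S : S⁻¹ * S = 1 := nonsing_inv_mul S hSdet
  have hSinvsym : (S⁻¹)ᵀ = S⁻¹ := by rw [transpose_nonsing_inv, hSsym]
  -- G * Rᵀ = 0
  have hGR : G * Rᵀ = 0 := by
    ext i j
    have hmem : Rᵀ.mulVecLin (Pi.single j 1) ∈ LinearMap.ker G.mulVecLin := by
      rw [← hR]; exact LinearMap.mem_range_self _ _
    have h0 : G *ᵥ (Rᵀ *ᵥ Pi.single j 1) = 0 := hmem
    rw [mulVec_mulVec, mulVec_single_one] at h0
    have := congr_fun h0 i
    simpa using this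
  have hBt : (R * S⁻¹)ᵀ = S⁻¹ * Rᵀ := by rw [transpose_mul, hSinvsym]
  have hCt : (G * S)ᵀ = S * Gᵀ := by rw [transpose_mul, hSsym]
  have hCBt : (G * S) * (R * S⁻¹)ᵀ = 0 := by
    rw [hBt, Matrix.mul_assoc G S (S⁻¹ * Rᵀ), ← Matrix.mul_assoc S S⁻¹ Rᵀ, hSS',
      Matrix.one_mul, hGR]
  -- Gᵀ has trivial kernel
  have hGt0 : ∀ x : Fin p → ℝ, Gᵀ *ᵥ x = 0 → x = 0 := by
    have hrank : Gᵀ.rank = p := by rw [rank_transpose, hG]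
    have h1 := LinearMap.finrank_range_add_finrank_ker Gᵀ.mulVecLin
    rw [show Module.finrank ℝ (LinearMap.range Gᵀ.mulVecLin) = Gᵀ.rank from rfl, hrank] at h1
    have h2 : Module.finrank ℝ (Fin p → ℝ) = p := by simp
    rw [h2] at h1
    have hker : LinearMap.ker Gᵀ.mulVecLin = ⊥ :=
      Submodule.finrank_eq_zero.mp (by omega)
    intro x hx
    have hx' : x ∈ LinearMap.ker Gᵀ.mulVecLin := hx
    rwa [hker, Submodule.mem_bot] at hx'
  -- (G*S)ᵀ has trivial kernel
  have hCt0 : ∀ x : Fin p → ℝ, (G * S)ᵀ *ᵥ x = 0 → x = 0 := by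
    intro x hx
    rw [hCt, ← mulVec_mulVec] at hx
    have h1 : S⁻¹ *ᵥ (S *ᵥ (Gᵀ *ᵥ x)) = 0 := by rw [hx, mulVec_zero]
    rw [mulVec_mulVec, hS'S, one_mulVec] at h1
    exact hGt0 x h1
  -- (G*S) * (G*S)ᵀ has unit determinant
  have hCC0 : ∀ x : Fin p → ℝ, ((G * S) * (G * S)ᵀ) *ᵥ x = 0 → x = 0 := by
    intro x hx
    have h1 : x ⬝ᵥ (((G * S) * (G * S)ᵀ) *ᵥ x) = 0 := by rw [hx, dotProduct_zero]
    rw [← mulVec_mulVec, dotProduct_mulVec, ← mulVec_transpose] at h1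
    exact hCt0 x (dotProduct_self_eq_zero.mp h1)
  have hinjCC : Function.Injective ((G * S) * (G * S)ᵀ).mulVec := by
    intro x y hxy
    have := hCC0 (x - y) (by rw [mulVec_sub, hxy, sub_self])
    exact sub_eq_zero.mp this
  have hCCdet : IsUnit ((G * S) * (G * S)ᵀ).det :=
    (isUnit_iff_isUnit_det _).mp (mulVec_injective_iff_isUnit.mp hinjCC)
  -- kernel condition
  have hker : ∀ x : Fin n → ℝ, (G * S) *ᵥ x = 0 → ∃ y, (R * S⁻¹)ᵀ *ᵥ y = x := by
    intro x hx
    rw [← mulVec_mulVec] at hx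
    have hmem : S *ᵥ x ∈ LinearMap.range Rᵀ.mulVecLin := by rw [hR]; exact hx
    obtain ⟨y, hy⟩ := hmem
    have hy' : Rᵀ *ᵥ y = S *ᵥ x := hy
    refine ⟨y, ?_⟩
    rw [hBt, ← mulVec_mulVec, hy', mulVec_mulVec, hS'S, one_mulVec]
  -- main algebraic identity
  have key := aux_proj (G * S) (R * S⁻¹) Yp hBYB hYBY hYBsym hCBt hCCdet hker
  -- translate the goal
  have hMG : M * Gᵀ = S * (G * S)ᵀ := by rw [← hSS, hCt, Matrix.mul_assoc]
  have hGMG : G * M * Gᵀ = (G * S) * (G * S)ᵀ := by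
    rw [← hSS, hCt]
    simp only [Matrix.mul_assoc]
  have hMinv : M⁻¹ = S⁻¹ * S⁻¹ := by rw [← hSS, Matrix.mul_inv_rev]
  have t1 : M * Gᵀ * (G * M * Gᵀ)⁻¹ * G
      = S * ((G * S)ᵀ * (((G * S) * (G * S)ᵀ)⁻¹ * (G * S))) * S⁻¹ := by
    rw [hMG, hGMG]
    simp only [Matrix.mul_assoc]
    rw [hSS', Matrix.mul_one]
  have t2 : S * Yp * R * M⁻¹ = S * (Yp * (R * S⁻¹)) * S⁻¹ := by
    rw [hMinv]
    simp only [Matrix.mul_assoc]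
  rw [t1, t2, ← Matrix.add_mul, ← Matrix.mul_add]
  rw [show (G * S)ᵀ * (((G * S) * (G * S)ᵀ)⁻¹ * (G * S)) + Yp * (R * S⁻¹) = 1 by
    rw [← Matrix.mul_assoc]; exact key]
  rw [Matrix.mul_one, hSS']
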